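/- Let X be a normed space, X* its continuous dual, and S* = {f ∈ X* : ‖f‖ = 1} the unit sphere of X*. For a nonempty closed convex set C ⊆ X define δ_C : S* → (−∞,∞] by δ_C(f) = sup f(C). Then for all nonempty closed convex sets A, B ⊆ X one has d_H(A,B) = sup_{f ∈ S*} ρ(δ_A(f), δ_B(f)), where ρ is the extended distance on (−∞,∞] given by ρ(x,y) = |x−y| if x,y are finite, ρ(∞,∞) = 0, and ρ(x,∞) = ρ(∞,x) = ∞ for finite x. In other words, the canonical representation C ↦ δ_C is an isometric embedding of Conv_H(X) into the hypermetric space of (−∞,∞]-valued functions on S* with the sup-distance. -/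

import Mathlib

/-- The canonical representation: `δ_C(f) = sup f(C)`, computed in `EReal`
(so that the value `∞` is allowed). -/
noncomputable def deltaSup {X : Type*} [NormedAddCommGroup X] [NormedSpace ℝ X]
    (C : Set X) (f : X →L[ℝ] ℝ) : EReal :=
  ⨆ x ∈ C, (f x : EReal)

/-- The extended distance `ρ` on `(-∞, ∞]`: `ρ(x,y) = |x - y|` for finite `x, y`,
`ρ(∞,∞) = 0` and `ρ(x,∞) = ρ(∞,x) = ∞` for finite `x`. -/
noncomputable def erealRho (x y : EReal) : ENNReal :=
  if x = ⊤ ∧ y = ⊤ then 0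
  else if x ≠ ⊤ ∧ y ≠ ⊤ then ENNReal.ofReal |x.toReal - y.toReal|
  else ⊤

open EMetric ENNReal

section Aux

variable {X : Type*} [NormedAddCommGroup X] [NormedSpace ℝ X]

lemma erealRho_comm (x y : EReal) : erealRho x y = erealRho y x := by
  unfold erealRho
  rcases eq_or_ne x ⊤ with hx | hx <;> rcases eq_or_ne y ⊤ with hy | hy <;>
    simp [hx, hy, abs_sub_comm]

lemma le_deltaSup {C : Set X} {x : X} (hx : x ∈ C) (f : X →L[ℝ] ℝ) :
    (f x : EReal) ≤ deltaSup C f :=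
  le_iSup₂ (f := fun y (_ : y ∈ C) => (f y : EReal)) x hx

lemma deltaSup_le {C : Set X} {f : X →L[ℝ] ℝ} {c : EReal}
    (h : ∀ x ∈ C, (f x : EReal) ≤ c) : deltaSup C f ≤ c := iSup₂_le h

lemma deltaSup_ne_bot {C : Set X} (hC : C.Nonempty) (f : X →L[ℝ] ℝ) :
    deltaSup C f ≠ ⊥ := by
  obtain ⟨x, hx⟩ := hC
  intro h
  have := le_deltaSup hx f
  rw [h, le_bot_iff] at this
  exact EReal.coe_ne_bot _ this

/-- If all values of `f` on `B` are `≤ s`, then for `a ∈ A`,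
`f a ≤ s + c` whenever `c` exceeds the (finite) Hausdorff distance. -/
lemma pt_bound {A B : Set X} {f : X →L[ℝ] ℝ} (hf : ‖f‖ = 1)
    (hd : hausdorffEdist A B ≠ ⊤) {c s : ℝ}
    (hc : (hausdorffEdist A B).toReal < c)
    (hs : ∀ b ∈ B, f b ≤ s) {a : X} (ha : a ∈ A) : f a ≤ s + c := by
  have h1 : infEdist a B < ENNReal.ofReal c := by
    refine lt_of_le_of_lt (infEdist_le_hausdorffEdist_of_mem ha) ?_
    exact (ENNReal.lt_ofReal_iff_toReal_lt hd).2 hc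
  obtain ⟨b, hb, hab⟩ := infEdist_lt_iff.1 h1
  have hab' : dist a b < c := edist_lt_ofReal.1 hab
  have h2 : ‖f (a - b)‖ ≤ ‖f‖ * ‖a - b‖ := f.le_opNorm _
  rw [hf, one_mul, map_sub] at h2
  have h3 : f a - f b ≤ dist a b := by
    calc f a - f b ≤ |f a - f b| := le_abs_self _
    _ ≤ ‖a - b‖ := h2
    _ = dist a b := (dist_eq_norm a b).symm
  have := hs b hb
  linarith

lemma deltaSup_ne_top_of_ne_top {A B : Set X} {f : X →L[ℝ] ℝ} (hf : ‖f‖ = 1)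
    (hd : hausdorffEdist A B ≠ ⊤) (hBne : B.Nonempty)
    (hB : deltaSup B f ≠ ⊤) : deltaSup A f ≠ ⊤ := by
  set s := (deltaSup B f).toReal with hs
  have hBb : deltaSup B f = (s : EReal) := (EReal.coe_toReal hB (deltaSup_ne_bot hBne f)).symm
  have hsb : ∀ b ∈ B, f b ≤ s := by
    intro b hb
    have := le_deltaSup hb f
    rw [hBb] at this
    exact_mod_cast this
  have : deltaSup A f ≤ ((s + ((hausdorffEdist A B).toReal + 1) : ℝ) : EReal) := by
    refine deltaSup_le fun a ha => ?_
    exact_mod_cast pt_bound hf hd (by linarith) hsb ha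
  exact ne_top_of_le_ne_top (EReal.coe_ne_top _) this

lemma real_le_of_forall_gt {x d : ℝ} (h : ∀ c, d < c → x ≤ c) : x ≤ d := by
  by_contra hx
  push_neg at hx
  have := h ((d + x) / 2) (by linarith)
  linarith

/-- Easy direction: each `ρ(δ_A f, δ_B f)` is at most the Hausdorff distance. -/
lemma rho_le {A B : Set X} (hAne : A.Nonempty) (hBne : B.Nonempty)
    {f : X →L[ℝ] ℝ} (hf : ‖f‖ = 1) :
    erealRho (deltaSup A f) (deltaSup B f) ≤ hausdorffEdist A B := by
  by_cases hd : hausdorffEdist A B = ⊤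
  · rw [hd]; exact le_top
  set d := (hausdorffEdist A B).toReal with hdd
  by_cases hA : deltaSup A f = ⊤
  · have hB : deltaSup B f = ⊤ := by
      by_contra hB
      exact (deltaSup_ne_top_of_ne_top hf hd hBne hB) hA
    simp [erealRho, hA, hB]
  · have hB : deltaSup B f ≠ ⊤ := by
      intro hB
      have hd' : hausdorffEdist B A ≠ ⊤ := by rw [hausdorffEdist, Metric.hausdorffEDist_comm]; exact hd
      by_cases hA' : deltaSup A f = ⊤
      · exact hA hA'
      · exact (deltaSup_ne_top_of_ne_top hf hd' hAne hA') hB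
    set tA := (deltaSup A f).toReal with htA
    set tB := (deltaSup B f).toReal with htB
    have hAa : deltaSup A f = (tA : EReal) := (EReal.coe_toReal hA (deltaSup_ne_bot hAne f)).symm
    have hBb : deltaSup B f = (tB : EReal) := (EReal.coe_toReal hB (deltaSup_ne_bot hBne f)).symm
    have hsA : ∀ a ∈ A, f a ≤ tA := fun a ha => by
      have := le_deltaSup ha f; rw [hAa] at this; exact_mod_cast this
    have hsB : ∀ b ∈ B, f b ≤ tB := fun b hb => by
      have := le_deltaSup hb f; rw [hBb] at this; exact_mod_cast this
    have h1 : tA - tB ≤ d := by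
      apply real_le_of_forall_gt
      intro c hc
      have : deltaSup A f ≤ ((tB + c : ℝ) : EReal) :=
        deltaSup_le fun a ha => by exact_mod_cast pt_bound hf hd hc hsB ha
      rw [hAa] at this
      have : tA ≤ tB + c := by exact_mod_cast this
      linarith
    have h2 : tB - tA ≤ d := by
      apply real_le_of_forall_gt
      intro c hc
      have hd' : hausdorffEdist B A ≠ ⊤ := by rw [hausdorffEdist, Metric.hausdorffEDist_comm]; exact hd
      have hc' : (hausdorffEdist B A).toReal < c := by rw [hausdorffEdist, Metric.hausdorffEDist_comm]; exact hc
      have : deltaSup B f ≤ ((tA + c : ℝ) : EReal) :=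
        deltaSup_le fun b hb => by exact_mod_cast pt_bound hf hd' hc' hsA hb
      rw [hBb] at this
      have : tB ≤ tA + c := by exact_mod_cast this
      linarith
    have habs : |tA - tB| ≤ d := abs_le.2 ⟨by linarith, by linarith⟩
    have : erealRho (deltaSup A f) (deltaSup B f) = ENNReal.ofReal |tA - tB| := by
      simp [erealRho, hA, hB, htA, htB]
    rw [this]
    calc ENNReal.ofReal |tA - tB| ≤ ENNReal.ofReal d := ENNReal.ofReal_le_ofReal habs
    _ = hausdorffEdist A B := ENNReal.ofReal_toReal hd

set_option maxHeartbeats 1000000 in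
/-- Hard direction (Hahn–Banach separation): for `a ∈ A`, the distance from `a` to `B`
is at most the sup of `ρ` over the dual unit sphere. -/
lemma infEdist_le_sup_rho {A B : Set X} (hBne : B.Nonempty) (hBco : Convex ℝ B)
    {a : X} (ha : a ∈ A) :
    infEdist a B ≤
      ⨆ f : {f : X →L[ℝ] ℝ // ‖f‖ = 1}, erealRho (deltaSup A f.1) (deltaSup B f.1) := by
  set S := ⨆ f : {f : X →L[ℝ] ℝ // ‖f‖ = 1}, erealRho (deltaSup A f.1) (deltaSup B f.1) with hS
  by_contra h
  push_neg at h
  obtain ⟨r, hSr, hr⟩ := ENNReal.lt_iff_exists_nnreal_btwn.1 h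
  obtain ⟨r', hSr', hr'r⟩ := ENNReal.lt_iff_exists_nnreal_btwn.1 hSr
  have hr'r' : (r' : ℝ) < r := by exact_mod_cast hr'r
  have hr'ne : r' ≠ 0 := by
    rintro rfl
    simp at hSr'
  have hr'0 : (0 : ℝ) < r' := NNReal.coe_pos.2 (lt_of_le_of_ne (zero_le) (Ne.symm hr'ne))
  -- the open ball of radius r around a is disjoint from B
  have hdisj : Disjoint (Metric.ball a (r : ℝ)) B := by
    rw [Set.disjoint_left]
    intro y hy hyB
    have h1 : infEdist a B ≤ edist a y := infEdist_le_edist_of_mem hyB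
    have h2 : edist a y < (r : ℝ≥0∞) := by
      rw [edist_lt_coe]
      exact_mod_cast Metric.mem_ball'.1 hy
    exact absurd (h1.trans_lt h2) (not_lt_of_ge hr.le)
  obtain ⟨f, u, hf1, hf2⟩ :=
    geometric_hahn_banach_open (convex_ball a (r : ℝ)) Metric.isOpen_ball hBco hdisj
  set g : X →L[ℝ] ℝ := -f with hg
  have haball : a ∈ Metric.ball a (r : ℝ) := by
    simp [Metric.mem_ball]
    exact_mod_cast lt_of_le_of_lt (by exact_mod_cast hr'0.le) hr'r'
  have hga : -u < g a := by
    have := hf1 a haball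
    simp [hg]
    linarith
  have hgB : ∀ b ∈ B, g b ≤ -u := by
    intro b hb
    have := hf2 b hb
    simp [hg]
    linarith
  have hgau : 0 < g a + u := by linarith
  -- g is nonzero
  have hgne : g ≠ 0 := by
    obtain ⟨b₀, hb₀⟩ := hBne
    intro h0
    have h1 := hgB b₀ hb₀
    rw [h0] at h1 hga
    simp at h1 hga
    linarith
  have hgpos : 0 < ‖g‖ := by
    rcases (norm_nonneg g).lt_or_eq with h' | h'
    · exact h'
    · exact absurd (g.opNorm_zero_iff.1 h'.symm) hgne
  -- key bound: r' * g x ≤ (g a + u) * ‖x‖ for all x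
  have hbound : ∀ x : X, (r' : ℝ) * g x ≤ (g a + u) * ‖x‖ := by
    intro x
    rcases eq_or_ne x 0 with rfl | hx0
    · simp
    · have hxn : (0 : ℝ) < ‖x‖ := norm_pos_iff.2 hx0
      set v : X := ((r' : ℝ) / ‖x‖) • x with hv
      have hvn : ‖v‖ = (r' : ℝ) := by
        rw [hv, norm_smul, Real.norm_eq_abs, abs_div, abs_of_pos hr'0, abs_of_pos hxn]
        field_simp
      have hmem : a - v ∈ Metric.ball a (r : ℝ) := by
        rw [Metric.mem_ball, dist_eq_norm]
        have hav : a - v - a = -v := by abel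
        rw [hav, norm_neg, hvn]
        exact hr'r'
      have := hf1 _ hmem
      have hgv : -u < g a - g v := by
        simp [hg] at this ⊢
        linarith
      have hgvval : g v = (r' : ℝ) / ‖x‖ * g x := by
        rw [hv, map_smul]; rfl
      rw [hgvval] at hgv
      have : (r' : ℝ) / ‖x‖ * g x < g a + u := by linarith
      calc (r' : ℝ) * g x = ((r' : ℝ) / ‖x‖ * g x) * ‖x‖ := by field_simp
      _ ≤ (g a + u) * ‖x‖ := by nlinarith
  have hnorm : ‖g‖ ≤ (g a + u) / r' := by
    apply g.opNorm_le_bound (by positivity)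
    intro x
    rw [Real.norm_eq_abs, abs_le]
    have hb1 := hbound x
    have hb2 := hbound (-x)
    rw [map_neg, norm_neg] at hb2
    constructor
    · rw [neg_le, div_mul_eq_mul_div, le_div_iff₀ hr'0]
      nlinarith
    · rw [div_mul_eq_mul_div, le_div_iff₀ hr'0]
      nlinarith
  have hkey : -u + (r' : ℝ) * ‖g‖ ≤ g a := by
    have h' : ‖g‖ * r' ≤ g a + u := (le_div_iff₀ hr'0).1 hnorm
    nlinarith
  -- normalize
  set f0 : X →L[ℝ] ℝ := ‖g‖⁻¹ • g with hf0
  have hf0n : ‖f0‖ = 1 := by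
    have hns := norm_smul (‖g‖⁻¹) g
    rw [hf0, hns, Real.norm_eq_abs, abs_of_pos (inv_pos.2 hgpos)]
    field_simp
  have hf0val : ∀ x : X, f0 x = ‖g‖⁻¹ * g x := fun x => rfl
  have hf0B : ∀ b ∈ B, f0 b ≤ f0 a - r' := by
    intro b hb
    have h1 := hgB b hb
    rw [hf0val, hf0val]
    have hinv : ‖g‖⁻¹ * ‖g‖ = 1 := by field_simp
    have : ‖g‖⁻¹ * g b ≤ ‖g‖⁻¹ * (-u) :=
      mul_le_mul_of_nonneg_left h1 (inv_pos.2 hgpos).le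
    have h2 : ‖g‖⁻¹ * (-u) ≤ ‖g‖⁻¹ * (g a - (r' : ℝ) * ‖g‖) := by
      apply mul_le_mul_of_nonneg_left _ (inv_pos.2 hgpos).le
      linarith
    have h3 : ‖g‖⁻¹ * (g a - (r' : ℝ) * ‖g‖) = ‖g‖⁻¹ * g a - (r' : ℝ) := by
      rw [mul_sub]
      congr 1
      rw [show ‖g‖⁻¹ * ((r' : ℝ) * ‖g‖) = (r' : ℝ) * (‖g‖⁻¹ * ‖g‖) by ring, hinv, mul_one]
    linarith
  -- deltaSup bounds
  have hdB : deltaSup B f0 ≤ ((f0 a - r' : ℝ) : EReal) :=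
    deltaSup_le fun b hb => by exact_mod_cast hf0B b hb
  have hdBt : deltaSup B f0 ≠ ⊤ := ne_top_of_le_ne_top (EReal.coe_ne_top _) hdB
  have hdBb : deltaSup B f0 ≠ ⊥ := deltaSup_ne_bot hBne f0
  have hdA : ((f0 a : ℝ) : EReal) ≤ deltaSup A f0 := le_deltaSup ha f0
  have hSge : erealRho (deltaSup A f0) (deltaSup B f0) ≤ S := by
    rw [hS]
    exact le_iSup (fun f : {f : X →L[ℝ] ℝ // ‖f‖ = 1} =>
      erealRho (deltaSup A f.1) (deltaSup B f.1)) ⟨f0, hf0n⟩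
  have hrle : (r' : ℝ≥0∞) ≤ erealRho (deltaSup A f0) (deltaSup B f0) := by
    rcases eq_or_ne (deltaSup A f0) ⊤ with hAt | hAt
    · have : erealRho (deltaSup A f0) (deltaSup B f0) = ⊤ := by
        simp [erealRho, hAt, hdBt]
      rw [this]; exact le_top
    · set tA := (deltaSup A f0).toReal with htA
      set tB := (deltaSup B f0).toReal with htB
      have hAab : deltaSup A f0 ≠ ⊥ := fun hbot => by
        rw [hbot] at hdA
        exact (EReal.coe_ne_bot _) (le_bot_iff.1 hdA)
      have hAa : deltaSup A f0 = (tA : EReal) := (EReal.coe_toReal hAt hAab).symm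
      have hBb : deltaSup B f0 = (tB : EReal) := (EReal.coe_toReal hdBt hdBb).symm
      have h1 : f0 a ≤ tA := by rw [hAa] at hdA; exact_mod_cast hdA
      have h2 : tB ≤ f0 a - r' := by rw [hBb] at hdB; exact_mod_cast hdB
      have : erealRho (deltaSup A f0) (deltaSup B f0) = ENNReal.ofReal |tA - tB| := by
        simp [erealRho, hAt, hdBt, htA, htB]
      rw [this, ← ENNReal.ofReal_coe_nnreal]
      apply ENNReal.ofReal_le_ofReal
      rw [le_abs]
      left
      linarith
  exact absurd (hrle.trans hSge) (not_le_of_gt hSr')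

end Aux

/-- The canonical representation `C ↦ δ_C` of the space of nonempty closed convex subsets
of a normed space `X` into the hypermetric space of `(-∞,∞]`-valued functions on the unit
sphere `S*` of the dual space, endowed with the sup-distance, is an isometric embedding:
`d_H(A,B) = sup_{f ∈ S*} ρ(δ_A(f), δ_B(f))`. -/
theorem canonical_representation_isometric
    {X : Type*} [NormedAddCommGroup X] [NormedSpace ℝ X]
    (A B : Set X) (hAne : A.Nonempty) (hBne : B.Nonempty)
    (hAcl : IsClosed A) (hBcl : IsClosed B)
    (hAco : Convex ℝ A) (hBco : Convex ℝ B) :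
    EMetric.hausdorffEdist A B =
      ⨆ f : {f : X →L[ℝ] ℝ // ‖f‖ = 1}, erealRho (deltaSup A f.1) (deltaSup B f.1) := by
  apply le_antisymm
  · apply EMetric.hausdorffEdist_le_of_infEdist
    · intro x hx
      exact infEdist_le_sup_rho hBne hBco hx
    · intro y hy
      have h := infEdist_le_sup_rho hAne hAco hy
      refine h.trans (le_of_eq ?_)
      congr 1
      funext f
      exact erealRho_comm _ _
  · exact iSup_le fun f => rho_le hAne hBne f.2
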